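/- For a ∈ ℂ and n ∈ ℕ let (a)_n denote the Pochhammer rising factorial a(a+1)⋯(a+n−1). Let r, χ, k, b, c, ω ∈ ℂ with χ ≠ 0, k ≠ 0 and b ≠ 0, and set λ = (ω/k − c − 2k/(iχ))/b and μ = ir²χkb. Then the function φ : ℝ → ℂ defined by φ(y) = (y − λ)²·Σ_{n≥0} ((1/3)_n/((4/3)_n(5/3)_n))·(μ(y − λ)³/9)ⁿ/n! is four times differentiable and satisfies φ⁗(y) − [2r²k² + ir²χk(by + c − ω/k)]·φ''(y) = 0 for all y ∈ ℝ. -/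

import Mathlib

open Complex

/-- The Pochhammer rising factorial `(a)_n = a(a+1)⋯(a+n−1)`. -/
noncomputable def poch (a : ℂ) (n : ℕ) : ℂ := (ascPochhammer ℂ n).eval a

namespace LongWaveAux

lemma poch_succ (a : ℂ) (n : ℕ) : poch a (n + 1) = poch a n * (a + n) :=
  ascPochhammer_succ_eval n a

lemma poch_ofReal (x : ℝ) (n : ℕ) :
    poch (x : ℂ) n = Complex.ofReal ((ascPochhammer ℝ n).eval x) := by
  induction n with
  | zero => simp [poch]
  | succ n ih =>
    rw [poch_succ, ih, ascPochhammer_succ_eval]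
    push_cast
    ring

/-- The coefficient sequence of the eigenfunction power series. -/
noncomputable def Afun (μ : ℂ) (n : ℕ) : ℂ :=
  poch (1/3) n / (poch (4/3) n * poch (5/3) n) * (μ/9) ^ n / (n.factorial : ℂ)

lemma pr_pos (x : ℝ) (hx : 0 < x) (n : ℕ) : 0 < (ascPochhammer ℝ n).eval x :=
  ascPochhammer_pos n x hx

lemma norm_poch_third (n : ℕ) : ‖poch (1/3) n‖ = (ascPochhammer ℝ n).eval (1/3) := by
  have : ((1/3 : ℝ) : ℂ) = (1/3 : ℂ) := by norm_num
  rw [← this, poch_ofReal, Complex.norm_real, Real.norm_eq_abs,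
    abs_of_pos (pr_pos _ (by norm_num) n)]

lemma norm_poch_fourThird (n : ℕ) : ‖poch (4/3) n‖ = (ascPochhammer ℝ n).eval (4/3) := by
  have : ((4/3 : ℝ) : ℂ) = (4/3 : ℂ) := by norm_num
  rw [← this, poch_ofReal, Complex.norm_real, Real.norm_eq_abs,
    abs_of_pos (pr_pos _ (by norm_num) n)]

lemma norm_poch_fiveThird (n : ℕ) : ‖poch (5/3) n‖ = (ascPochhammer ℝ n).eval (5/3) := by
  have : ((5/3 : ℝ) : ℂ) = (5/3 : ℂ) := by norm_num
  rw [← this, poch_ofReal, Complex.norm_real, Real.norm_eq_abs,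
    abs_of_pos (pr_pos _ (by norm_num) n)]

lemma pr_le_pr (n : ℕ) :
    (ascPochhammer ℝ n).eval (1/3) ≤ (ascPochhammer ℝ n).eval (4/3) := by
  induction n with
  | zero => simp
  | succ n ih =>
    rw [ascPochhammer_succ_eval, ascPochhammer_succ_eval]
    have h1 : (0:ℝ) ≤ 1/3 + n := by positivity
    have h2 : (1/3 : ℝ) + n ≤ 4/3 + n := by linarith
    have h3 : 0 ≤ (ascPochhammer ℝ n).eval (1/3) := (pr_pos _ (by norm_num) n).le
    exact mul_le_mul ih h2 h1 (pr_pos (4/3) (by norm_num) n).le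

lemma fact_le_pr (n : ℕ) :
    (n.factorial : ℝ) ≤ (ascPochhammer ℝ n).eval (5/3) := by
  induction n with
  | zero => simp
  | succ n ih =>
    rw [ascPochhammer_succ_eval, Nat.factorial_succ]
    push_cast
    have h1 : ((n:ℝ) + 1) ≤ 5/3 + n := by linarith
    have h2 : (0:ℝ) ≤ (n:ℝ) + 1 := by positivity
    calc ((n:ℝ)+1) * n.factorial = (n.factorial : ℝ) * ((n:ℝ)+1) := by ring
    _ ≤ (ascPochhammer ℝ n).eval (5/3) * (5/3 + n) :=
      mul_le_mul ih h1 h2 (pr_pos _ (by norm_num) n).le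

lemma Afun_norm_le (μ : ℂ) (n : ℕ) : ‖Afun μ n‖ ≤ ‖μ/9‖ ^ n / n.factorial := by
  have h43 := pr_pos (4/3) (by norm_num) n
  have h53 := pr_pos (5/3) (by norm_num) n
  have hfac : (1:ℝ) ≤ n.factorial := by exact_mod_cast n.factorial_pos
  have hratio : (ascPochhammer ℝ n).eval (1/3) /
      ((ascPochhammer ℝ n).eval (4/3) * (ascPochhammer ℝ n).eval (5/3)) ≤ 1 := by
    rw [div_le_one (by positivity)]
    calc (ascPochhammer ℝ n).eval (1/3) ≤ (ascPochhammer ℝ n).eval (4/3) := pr_le_pr n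
    _ = (ascPochhammer ℝ n).eval (4/3) * 1 := by ring
    _ ≤ (ascPochhammer ℝ n).eval (4/3) * (ascPochhammer ℝ n).eval (5/3) := by
        have := (fact_le_pr n); nlinarith
  have : ‖Afun μ n‖ = (ascPochhammer ℝ n).eval (1/3) /
      ((ascPochhammer ℝ n).eval (4/3) * (ascPochhammer ℝ n).eval (5/3)) *
      ‖μ/9‖ ^ n / n.factorial := by
    rw [Afun]
    rw [norm_div, norm_mul, norm_div, norm_mul, norm_pow]
    rw [norm_poch_third, norm_poch_fourThird, norm_poch_fiveThird]
    simp [Complex.norm_natCast]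
  rw [this]
  have hb : (0:ℝ) ≤ ‖μ/9‖ ^ n := by positivity
  have hfacpos : (0:ℝ) < n.factorial := by exact_mod_cast n.factorial_pos
  have hle : (ascPochhammer ℝ n).eval (1/3) /
      ((ascPochhammer ℝ n).eval (4/3) * (ascPochhammer ℝ n).eval (5/3)) * ‖μ/9‖ ^ n
      ≤ ‖μ/9‖ ^ n := mul_le_of_le_one_left hb hratio
  exact (div_le_div_iff_of_pos_right hfacpos).mpr hle


lemma rec_helper (p1 p4 p5 m F u v w N μ : ℂ) (h4 : p4 ≠ 0) (h5 : p5 ≠ 0)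
    (hv : v ≠ 0) (hw : w ≠ 0) (hN : N ≠ 0) (hF : F ≠ 0) :
    p1 * u / (p4 * v * (p5 * w)) * (m * (μ/9)) / (N * F) * (v * w * N * 9)
    = p1 / (p4 * p5) * m / F * (u * μ) := by
  field_simp

lemma Afun_rec (μ : ℂ) (n : ℕ) :
    Afun μ (n+1) * ((4/3 + (n:ℂ)) * (5/3 + (n:ℂ)) * ((n:ℂ) + 1) * 9)
      = Afun μ n * ((1/3 + (n:ℂ)) * μ) := by
  have h43 : poch (4/3) n ≠ 0 := by
    have : ((4/3 : ℝ) : ℂ) = (4/3 : ℂ) := by norm_num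
    rw [← this, poch_ofReal]
    exact_mod_cast (pr_pos (4/3) (by norm_num) n).ne'
  have h53 : poch (5/3) n ≠ 0 := by
    have : ((5/3 : ℝ) : ℂ) = (5/3 : ℂ) := by norm_num
    rw [← this, poch_ofReal]
    exact_mod_cast (pr_pos (5/3) (by norm_num) n).ne'
  have h43' : (4/3 + (n:ℂ)) ≠ 0 := by
    have : (4/3 + (n:ℂ)) = ((4/3 + (n:ℝ) : ℝ) : ℂ) := by push_cast; ring
    rw [this]
    exact_mod_cast (by positivity : (0:ℝ) < 4/3 + (n:ℝ)).ne'
  have h53' : (5/3 + (n:ℂ)) ≠ 0 := by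
    have : (5/3 + (n:ℂ)) = ((5/3 + (n:ℝ) : ℝ) : ℂ) := by push_cast; ring
    rw [this]
    exact_mod_cast (by positivity : (0:ℝ) < 5/3 + (n:ℝ)).ne'
  have hn1 : ((n:ℂ) + 1) ≠ 0 := Nat.cast_add_one_ne_zero n
  have hfac : ((n.factorial : ℂ)) ≠ 0 := by
    exact_mod_cast n.factorial_ne_zero
  rw [Afun, Afun, poch_succ, poch_succ, poch_succ, Nat.factorial_succ, pow_succ]
  push_cast
  linear_combination rec_helper (poch (1/3) n) (poch (4/3) n) (poch (5/3) n)
    ((μ/9)^n) (n.factorial : ℂ) (1/3 + (n:ℂ)) (4/3 + (n:ℂ)) (5/3 + (n:ℂ)) ((n:ℂ) + 1) μ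
    h43 h53 h43' h53' hn1 hfac

lemma summable_major (B R : ℝ) (hB : 0 ≤ B) (hR : 1 ≤ R) :
    Summable (fun n : ℕ =>
      B ^ n / n.factorial * ((3*n+2 : ℕ) : ℝ) ^ 5 * R ^ (3*n+2)) := by
  have hR0 : (0:ℝ) < R := lt_of_lt_of_le one_pos hR
  apply Summable.of_nonneg_of_le
    (f := fun n : ℕ => (B * (32*R)^3)^n / n.factorial * (32*R)^2)
  · intro n; positivity
  · intro n
    have hm : ((3*n+2 : ℕ) : ℝ) ^ 5 ≤ (32:ℝ) ^ (3*n+2) := by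
      have hnat : (3*n+2)^5 ≤ 32^(3*n+2) := by
        calc (3*n+2)^5 ≤ (2^(3*n+2))^5 := Nat.pow_le_pow_left (Nat.lt_two_pow_self).le 5
        _ = 32^(3*n+2) := by
            rw [← Nat.pow_mul, show (32:ℕ) = 2^5 from rfl, ← Nat.pow_mul, Nat.mul_comm 5 (3*n+2)]
      exact_mod_cast hnat
    calc B ^ n / n.factorial * ((3*n+2 : ℕ) : ℝ) ^ 5 * R ^ (3*n+2)
        ≤ B ^ n / n.factorial * (32:ℝ) ^ (3*n+2) * R ^ (3*n+2) := by
          exact mul_le_mul_of_nonneg_right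
            (mul_le_mul_of_nonneg_left hm (by positivity)) (by positivity)
    _ = B ^ n / n.factorial * (32*R) ^ (3*n+2) := by rw [mul_pow]; ring
    _ = (B * (32*R)^3)^n / n.factorial * (32*R)^2 := by
        rw [pow_add, pow_mul, mul_pow B ((32*R)^3) n]
        ring
  · exact (Real.summable_pow_div_factorial (B * (32*R)^3)).mul_right _

lemma term_hasDerivAt (lam C : ℂ) (m : ℕ) (y : ℝ) :
    HasDerivAt (fun t : ℝ => C * (((t:ℂ) - lam) ^ m))
      (C * ((m : ℂ) * ((y:ℂ) - lam) ^ (m-1))) y := by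
  have h0 : HasDerivAt (fun z : ℂ => z - lam) 1 ((y:ℝ) : ℂ) :=
    (hasDerivAt_id _).sub_const lam
  have h1 := (h0.pow (n := m)).comp_ofReal
  have h2 := h1.const_mul C
  simpa using h2

/-- The `j`-th term-by-term derivative of the eigenfunction series. -/
noncomputable def gfun (μ lam : ℂ) (j : ℕ) (y : ℝ) : ℂ :=
  ∑' n : ℕ, Afun μ n * (((3*n+2).descFactorial j : ℕ) : ℂ) * ((y:ℂ) - lam) ^ (3*n+2-j)

lemma gfun_bound (μ lam : ℂ) {j : ℕ} (hj : j ≤ 5) (y₀ : ℝ) (n : ℕ) (x : ℝ)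
    (hx : x ∈ Metric.ball y₀ 1) :
    ‖Afun μ n * (((3*n+2).descFactorial j : ℕ) : ℂ) * ((x:ℂ) - lam) ^ (3*n+2-j)‖
      ≤ ‖μ/9‖ ^ n / n.factorial * ((3*n+2 : ℕ) : ℝ) ^ 5 * (|y₀| + ‖lam‖ + 1) ^ (3*n+2) := by
  set R : ℝ := |y₀| + ‖lam‖ + 1 with hR
  have hR1 : (1:ℝ) ≤ R := by
    have := abs_nonneg y₀; have := norm_nonneg lam; rw [hR]; linarith
  have hz : ‖(x:ℂ) - lam‖ ≤ R := by
    have hxy : |x - y₀| < 1 := by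
      simpa [Real.dist_eq] using hx
    calc ‖(x:ℂ) - lam‖ ≤ ‖(x:ℂ)‖ + ‖lam‖ := norm_sub_le _ _
    _ = |x| + ‖lam‖ := by rw [Complex.norm_real, Real.norm_eq_abs]
    _ ≤ (|y₀| + 1) + ‖lam‖ := by
        have : |x| ≤ |y₀| + |x - y₀| := by
          calc |x| = |y₀ + (x - y₀)| := by ring_nf
          _ ≤ |y₀| + |x - y₀| := abs_add_le _ _
        linarith
    _ = R := by rw [hR]; ring
  have hdf : (((3*n+2).descFactorial j : ℕ) : ℝ) ≤ ((3*n+2 : ℕ) : ℝ) ^ 5 := by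
    have : (3*n+2).descFactorial j ≤ (3*n+2)^5 := by
      calc (3*n+2).descFactorial j ≤ (3*n+2)^j := Nat.descFactorial_le_pow _ _
      _ ≤ (3*n+2)^5 := Nat.pow_le_pow_right (by omega) hj
    exact_mod_cast this
  have hzp : ‖(x:ℂ) - lam‖ ^ (3*n+2-j) ≤ R ^ (3*n+2) := by
    calc ‖(x:ℂ) - lam‖ ^ (3*n+2-j) ≤ R ^ (3*n+2-j) :=
      pow_le_pow_left₀ (norm_nonneg _) hz _
    _ ≤ R ^ (3*n+2) := pow_le_pow_right₀ hR1 (by omega)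
  rw [norm_mul, norm_mul, norm_pow]
  have hA := Afun_norm_le μ n
  have h1 : ‖(((3*n+2).descFactorial j : ℕ) : ℂ)‖ = (((3*n+2).descFactorial j : ℕ) : ℝ) := by
    rw [Complex.norm_natCast]
  rw [h1]
  have c1 : (0:ℝ) ≤ (((3*n+2).descFactorial j : ℕ) : ℝ) := by positivity
  have c2 : (0:ℝ) ≤ ‖(x:ℂ) - lam‖ ^ (3*n+2-j) := by positivity
  have c3 : (0:ℝ) ≤ ‖μ/9‖ ^ n / n.factorial := by positivity
  calc ‖Afun μ n‖ * (((3*n+2).descFactorial j : ℕ) : ℝ) * ‖(x:ℂ) - lam‖ ^ (3*n+2-j)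
      ≤ (‖μ/9‖ ^ n / n.factorial) * ((3*n+2 : ℕ) : ℝ) ^ 5 * R ^ (3*n+2) := by
        apply mul_le_mul
        · exact mul_le_mul hA hdf c1 c3
        · exact hzp
        · exact c2
        · positivity

lemma gfun_term_summable (μ lam : ℂ) {j : ℕ} (hj : j ≤ 5) (y : ℝ) :
    Summable (fun n : ℕ =>
      Afun μ n * (((3*n+2).descFactorial j : ℕ) : ℂ) * ((y:ℂ) - lam) ^ (3*n+2-j)) := by
  apply Summable.of_norm_bounded (summable_major ‖μ/9‖ (|y| + ‖lam‖ + 1)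
    (norm_nonneg _) (by have := abs_nonneg y; have := norm_nonneg lam; linarith))
  intro n
  exact gfun_bound μ lam hj y n y (Metric.mem_ball_self one_pos)

lemma gfun_hasDerivAt (μ lam : ℂ) {j : ℕ} (hj : j ≤ 4) (y : ℝ) :
    HasDerivAt (gfun μ lam j) (gfun μ lam (j+1) y) y := by
  have key := hasDerivAt_tsum_of_isPreconnected
    (u := fun n : ℕ => ‖μ/9‖ ^ n / n.factorial * ((3*n+2 : ℕ) : ℝ) ^ 5 *
      (|y| + ‖lam‖ + 1) ^ (3*n+2))
    (g := fun (n : ℕ) (x : ℝ) =>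
      Afun μ n * (((3*n+2).descFactorial j : ℕ) : ℂ) * ((x:ℂ) - lam) ^ (3*n+2-j))
    (g' := fun (n : ℕ) (x : ℝ) =>
      Afun μ n * (((3*n+2).descFactorial (j+1) : ℕ) : ℂ) * ((x:ℂ) - lam) ^ (3*n+2-(j+1)))
    (summable_major ‖μ/9‖ (|y| + ‖lam‖ + 1) (norm_nonneg _)
      (by have := abs_nonneg y; have := norm_nonneg lam; linarith))
    Metric.isOpen_ball (convex_ball (y:ℝ) 1).isPreconnected
    ?_ ?_ (Metric.mem_ball_self one_pos)
    (gfun_term_summable μ lam (by omega) y) (Metric.mem_ball_self one_pos)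
  · exact key
  · intro n x hx
    have h := term_hasDerivAt lam
      (Afun μ n * (((3*n+2).descFactorial j : ℕ) : ℂ)) (3*n+2-j) x
    have harr : (Afun μ n * (((3*n+2).descFactorial j : ℕ) : ℂ)) *
        (((3*n+2-j : ℕ) : ℂ) * ((x:ℂ) - lam) ^ (3*n+2-j-1))
        = Afun μ n * (((3*n+2).descFactorial (j+1) : ℕ) : ℂ) * ((x:ℂ) - lam) ^ (3*n+2-(j+1)) := by
      rw [Nat.descFactorial_succ, Nat.sub_sub]
      push_cast [Nat.cast_mul]
      ring
    have h2 := h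
    rw [harr] at h2
    convert h2 using 2 <;> ring
  · intro n x hx
    exact gfun_bound μ lam (by omega) y n x hx

lemma ne43 (n : ℕ) : (4/3 + (n:ℂ)) ≠ 0 := by
  have : (4/3 + (n:ℂ)) = ((4/3 + (n:ℝ) : ℝ) : ℂ) := by push_cast; ring
  rw [this]
  exact_mod_cast (by positivity : (0:ℝ) < 4/3 + (n:ℝ)).ne'

lemma ne53 (n : ℕ) : (5/3 + (n:ℂ)) ≠ 0 := by
  have : (5/3 + (n:ℂ)) = ((5/3 + (n:ℝ) : ℝ) : ℂ) := by push_cast; ring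
  rw [this]
  exact_mod_cast (by positivity : (0:ℝ) < 5/3 + (n:ℝ)).ne'

end LongWaveAux



open LongWaveAux in
/-- Configuration 3, equations (85) and (88): with `λ = (ω/k − c − 2k/(iχ))/b` and
`μ = ir²χkb`, the function
`φ(y) = (y − λ)²·₁F₂(1/3; 4/3, 5/3; μ(y − λ)³/9)` is four times differentiable
and satisfies the long-wave reduced Orr–Sommerfeld equation
`φ⁗ − [2r²k² + ir²χk(by + c − ω/k)]φ'' = 0`. -/
theorem long_wave_linear_profile_eigenfunction
    (r χ k b c ω : ℂ) (hχ : χ ≠ 0) (hk : k ≠ 0) (hb : b ≠ 0)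
    (lam μ : ℂ)
    (hlam : lam = (ω / k - c - 2 * k / (I * χ)) / b)
    (hμ : μ = I * r ^ 2 * χ * k * b)
    (φ : ℝ → ℂ)
    (hφdef : ∀ y : ℝ, φ y =
      ((y : ℂ) - lam) ^ 2 * ∑' n : ℕ,
        (poch (1/3) n / (poch (4/3) n * poch (5/3) n))
          * (μ * ((y : ℂ) - lam) ^ 3 / 9) ^ n / (n.factorial : ℂ)) :
    ContDiff ℝ 4 φ ∧
    ∀ y : ℝ,
      iteratedDeriv 4 φ y
        - (2 * r ^ 2 * k ^ 2 + I * r ^ 2 * χ * k * (b * (y : ℂ) + c - ω / k))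
            * iteratedDeriv 2 φ y = 0 := by

  have hφ0 : φ = gfun μ lam 0 := by
    funext y
    rw [hφdef y]
    unfold gfun
    rw [← tsum_mul_left]
    refine (tsum_congr fun n => ?_).symm
    unfold Afun
    simp only [Nat.descFactorial_zero, Nat.cast_one, Nat.sub_zero, mul_one]
    have hw : (μ * ((y:ℂ) - lam)^3 / 9)^n = μ^n * ((y:ℂ) - lam)^(3*n) / 9^n := by
      rw [div_pow, mul_pow, ← pow_mul]
    have hw2 : (μ/9 : ℂ)^n = μ^n / 9^n := div_pow μ 9 n
    rw [hw, hw2]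
    ring
  have hd : ∀ j : ℕ, j ≤ 4 → deriv (gfun μ lam j) = gfun μ lam (j+1) := fun j hj =>
    funext fun y => (gfun_hasDerivAt μ lam hj y).deriv
  have e0 : iteratedDeriv 0 φ = gfun μ lam 0 := by rw [iteratedDeriv_zero, hφ0]
  have e1 : iteratedDeriv 1 φ = gfun μ lam 1 := by
    rw [show (1:ℕ) = 0+1 from rfl, iteratedDeriv_succ, e0, hd 0 (by norm_num)]
  have e2 : iteratedDeriv 2 φ = gfun μ lam 2 := by
    rw [show (2:ℕ) = 1+1 from rfl, iteratedDeriv_succ, e1, hd 1 (by norm_num)]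
  have e3 : iteratedDeriv 3 φ = gfun μ lam 3 := by
    rw [show (3:ℕ) = 2+1 from rfl, iteratedDeriv_succ, e2, hd 2 (by norm_num)]
  have e4 : iteratedDeriv 4 φ = gfun μ lam 4 := by
    rw [show (4:ℕ) = 3+1 from rfl, iteratedDeriv_succ, e3, hd 3 (by norm_num)]
  constructor
  · have hmain : ContDiff ℝ ((4:ℕ) : ℕ∞) φ := by
      apply contDiff_of_differentiable_iteratedDeriv
      intro m hm
      have hm4 : m ≤ 4 := by exact_mod_cast hm
      interval_cases m
      · rw [e0]; exact fun y => (gfun_hasDerivAt μ lam (by norm_num) y).differentiableAt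
      · rw [e1]; exact fun y => (gfun_hasDerivAt μ lam (by norm_num) y).differentiableAt
      · rw [e2]; exact fun y => (gfun_hasDerivAt μ lam (by norm_num) y).differentiableAt
      · rw [e3]; exact fun y => (gfun_hasDerivAt μ lam (by norm_num) y).differentiableAt
      · rw [e4]; exact fun y => (gfun_hasDerivAt μ lam (by norm_num) y).differentiableAt
    exact_mod_cast hmain
  · intro y
    have hcoef : (2 * r ^ 2 * k ^ 2 + I * r ^ 2 * χ * k * (b * (y:ℂ) + c - ω / k))
        = μ * ((y:ℂ) - lam) := by
      rw [hμ, hlam]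
      field_simp
      ring
    rw [e4, e2, hcoef, sub_eq_zero]
    unfold gfun
    rw [← tsum_mul_left]
    rw [Summable.tsum_eq_zero_add (gfun_term_summable μ lam (by norm_num) y)]
    have hzero : Afun μ 0 * (((3*0+2).descFactorial 4 : ℕ) : ℂ) * ((y:ℂ) - lam) ^ (3*0+2-4)
        = 0 := by
      norm_num [show (3*0+2).descFactorial 4 = 0 from by decide]
    rw [hzero, zero_add]
    refine tsum_congr fun n => ?_
    have hD : ((4/3 + (n:ℂ)) * (5/3 + (n:ℂ)) * ((n:ℂ) + 1) * 9) ≠ 0 := by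
      have h1 := ne43 n
      have h2 := ne53 n
      have h3 : ((n:ℂ) + 1) ≠ 0 := Nat.cast_add_one_ne_zero n
      have h4 : (9:ℂ) ≠ 0 := by norm_num
      exact mul_ne_zero (mul_ne_zero (mul_ne_zero h1 h2) h3) h4
    have hA1 : Afun μ (n+1) = Afun μ n * ((1/3 + (n:ℂ)) * μ) /
        ((4/3 + (n:ℂ)) * (5/3 + (n:ℂ)) * ((n:ℂ) + 1) * 9) := by
      rw [eq_div_iff hD]
      exact Afun_rec μ n
    have hd4 : (((3*(n+1)+2).descFactorial 4 : ℕ) : ℂ)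
        = (3*(n:ℂ)+2) * (3*(n:ℂ)+3) * (3*(n:ℂ)+4) * (3*(n:ℂ)+5) := by
      have hnat : (3*(n+1)+2).descFactorial 4 = (3*n+2) * (3*n+3) * (3*n+4) * (3*n+5) := by
        have hidx : 3*(n+1)+2 = 3*n+5 := by omega
        rw [hidx]
        simp only [Nat.descFactorial_succ, Nat.descFactorial_zero, Nat.sub_zero, mul_one]
        have a1 : 3*n+5-3 = 3*n+2 := by omega
        have a2 : 3*n+5-2 = 3*n+3 := by omega
        have a3 : 3*n+5-1 = 3*n+4 := by omega
        rw [a1, a2, a3]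
        try ring
      rw [hnat]
      push_cast
      ring
    have hd2 : (((3*n+2).descFactorial 2 : ℕ) : ℂ) = (3*(n:ℂ)+1) * (3*(n:ℂ)+2) := by
      have hnat : (3*n+2).descFactorial 2 = (3*n+1) * (3*n+2) := by
        simp only [Nat.descFactorial_succ, Nat.descFactorial_zero, Nat.sub_zero, mul_one]
        have a1 : 3*n+2-1 = 3*n+1 := by omega
        rw [a1]
        try ring
      rw [hnat]
      push_cast
      ring
    have he4 : 3*(n+1)+2-4 = 3*n+1 := by omega
    have he2 : 3*n+2-2 = 3*n := by omega
    rw [hA1, hd4, hd2, he4, he2]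
    rw [div_mul_eq_mul_div, div_mul_eq_mul_div, div_eq_iff hD]
    ring
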